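/- Let P be a graded tree poset of height k (every maximal chain of P has exactly k elements and the Hasse diagram of P is a tree), and assume P is not a chain. Then there exists an element v ∈ P that is a leaf of the Hasse diagram, and an interval I of P with |I| ≤ k - 1 containing v, such that the Hasse diagram of P \ I is a tree and P \ I (with the induced order) is a graded poset of height k. -/

import Mathlib

/-- The Hasse diagram of a poset: vertices are the elements, with an edge between
`u` and `v` whenever one covers the other. -/
def hasse (P : Type*) [PartialOrder P] : SimpleGraph P where
  Adj u v := u ⋖ v ∨ v ⋖ u
  symm := ⟨fun u v h => Or.symm h⟩
  loopless := ⟨by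
    intro u h
    rcases h with h | h <;> exact absurd h.lt (lt_irrefl u)⟩

section flip
variable {X : Type*}

lemma covBy_flip (i₁ i₂ : PartialOrder X)
    (h : ∀ a b : X, @LE.le X (@Preorder.toLE X (@PartialOrder.toPreorder X i₁)) a b ↔
      @LE.le X (@Preorder.toLE X (@PartialOrder.toPreorder X i₂)) b a) (a b : X) :
    @CovBy X (@Preorder.toLT X (@PartialOrder.toPreorder X i₁)) a b ↔
      @CovBy X (@Preorder.toLT X (@PartialOrder.toPreorder X i₂)) b a := by
  have hlt : ∀ a b : X, @LT.lt X (@Preorder.toLT X (@PartialOrder.toPreorder X i₁)) a b ↔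
      @LT.lt X (@Preorder.toLT X (@PartialOrder.toPreorder X i₂)) b a := by
    intro a b
    rw [@lt_iff_le_not_ge X (@PartialOrder.toPreorder X i₁),
        @lt_iff_le_not_ge X (@PartialOrder.toPreorder X i₂), h, h]
  constructor
  · rintro ⟨h1, h2⟩
    exact ⟨(hlt a b).1 h1, fun c hc1 hc2 => h2 ((hlt a c).2 hc2) ((hlt c b).2 hc1)⟩
  · rintro ⟨h1, h2⟩
    exact ⟨(hlt a b).2 h1, fun c hc1 hc2 => h2 ((hlt c b).1 hc2) ((hlt a c).1 hc1)⟩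

lemma hasse_flip (i₁ i₂ : PartialOrder X)
    (h : ∀ a b : X, @LE.le X (@Preorder.toLE X (@PartialOrder.toPreorder X i₁)) a b ↔
      @LE.le X (@Preorder.toLE X (@PartialOrder.toPreorder X i₂)) b a) :
    @hasse X i₁ = @hasse X i₂ := by
  ext u v
  show (_ ∨ _) ↔ (_ ∨ _)
  rw [covBy_flip i₁ i₂ h, covBy_flip i₁ i₂ h]
  exact or_comm

lemma isChain_flip (i₁ i₂ : PartialOrder X)
    (h : ∀ a b : X, @LE.le X (@Preorder.toLE X (@PartialOrder.toPreorder X i₁)) a b ↔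
      @LE.le X (@Preorder.toLE X (@PartialOrder.toPreorder X i₂)) b a) (C : Set X) :
    IsChain (fun a b => @LE.le X (@Preorder.toLE X (@PartialOrder.toPreorder X i₁)) a b) C ↔
      IsChain (fun a b => @LE.le X (@Preorder.toLE X (@PartialOrder.toPreorder X i₂)) a b) C := by
  constructor <;> (intro hC a ha b hb hab; rcases hC ha hb hab with h1 | h1)
  · exact Or.inr ((h a b).1 h1)
  · exact Or.inl ((h b a).1 h1)
  · exact Or.inr ((h b a).2 h1)
  · exact Or.inl ((h a b).2 h1)

lemma isMaxChain_flip (i₁ i₂ : PartialOrder X)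
    (h : ∀ a b : X, @LE.le X (@Preorder.toLE X (@PartialOrder.toPreorder X i₁)) a b ↔
      @LE.le X (@Preorder.toLE X (@PartialOrder.toPreorder X i₂)) b a) (C : Set X) :
    IsMaxChain (fun a b => @LE.le X (@Preorder.toLE X (@PartialOrder.toPreorder X i₁)) a b) C ↔
      IsMaxChain (fun a b => @LE.le X (@Preorder.toLE X (@PartialOrder.toPreorder X i₂)) a b) C := by
  constructor <;> rintro ⟨h1, h2⟩
  · exact ⟨(isChain_flip i₁ i₂ h C).1 h1, fun u hu hsub => h2 ((isChain_flip i₁ i₂ h u).2 hu) hsub⟩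
  · exact ⟨(isChain_flip i₁ i₂ h C).2 h1, fun u hu hsub => h2 ((isChain_flip i₁ i₂ h u).1 hu) hsub⟩

lemma icc_flip (i₁ i₂ : PartialOrder X)
    (h : ∀ a b : X, @LE.le X (@Preorder.toLE X (@PartialOrder.toPreorder X i₁)) a b ↔
      @LE.le X (@Preorder.toLE X (@PartialOrder.toPreorder X i₂)) b a) (a b : X) :
    @Set.Icc X (@PartialOrder.toPreorder X i₁) a b =
      @Set.Icc X (@PartialOrder.toPreorder X i₂) b a := by
  ext z
  show (_ ∧ _) ↔ (_ ∧ _)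
  constructor
  · rintro ⟨p, q⟩; exact ⟨(h z b).1 q, (h a z).1 p⟩
  · rintro ⟨p, q⟩; exact ⟨(h a z).2 q, (h z b).2 p⟩

end flip

/-- The key configuration: a covering pair `t ⋖ x` such that `t` has another upper
cover, everything above `x` is a chain, and all lower covers of elements of `Ici x`
are either `t` or in `Ici x`. -/
def ConfigUp (Q : Type*) [PartialOrder Q] : Prop :=
  ∃ x t t' : Q, t ⋖ x ∧ t ⋖ t' ∧ t' ≠ x ∧ IsChain (· ≤ ·) (Set.Ici x) ∧
    ∀ z w : Q, x ≤ z → w ⋖ z → w = t ∨ x ≤ w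

/-- The conclusion of the main theorem, as a predicate. -/
def Concl (Q : Type*) [PartialOrder Q] (k : ℕ) : Prop :=
  ∃ v : Q, ((hasse Q).neighborSet v).ncard = 1 ∧
    ∃ I : Set Q, v ∈ I ∧ (∃ x y : Q, x ≤ y ∧ I = Set.Icc x y) ∧
      I.ncard ≤ k - 1 ∧
      (hasse ↥(Iᶜ)).IsTree ∧
      (∀ D : Set (↥(Iᶜ)), IsMaxChain (· ≤ ·) D → D.ncard = k)

/-- Deleting a set of vertices whose only boundary contact is a single vertex `t`
from a tree leaves a tree, provided the subgraph is the induced one. -/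
lemma tree_delete {V : Type*} {G : SimpleGraph V} (htree : G.IsTree) (S : Set V) {t : V}
    (ht : t ∉ S) (hb : ∀ a c : V, a ∉ S → c ∈ S → G.Adj a c → a = t)
    (G' : SimpleGraph ↥(Sᶜ)) (hadj : ∀ a b : ↥(Sᶜ), G'.Adj a b ↔ G.Adj a.1 b.1) :
    G'.IsTree := by
  have exit : ∀ {c b : V} (q : G.Walk c b), c ∈ S → b ∉ S → t ∈ q.support := by
    intro c b q
    induction q with
    | nil => intro hc hb'; exact absurd hc hb'
    | @cons c d b h q ih =>
      intro hc hb'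
      rw [SimpleGraph.Walk.support_cons]
      by_cases hd : d ∈ S
      · exact List.mem_cons_of_mem _ (ih hd hb')
      · have : d = t := hb d c hd hc h.symm
        exact List.mem_cons_of_mem _ (this ▸ q.start_mem_support)
  have transfer : ∀ {a b : V} (p : G.Walk a b), p.IsPath → ∀ (ha : a ∉ S) (hb : b ∉ S),
      Nonempty (G'.Walk ⟨a, ha⟩ ⟨b, hb⟩) := by
    intro a b p
    induction p with
    | nil => intro _ ha hb'; exact ⟨SimpleGraph.Walk.nil⟩
    | @cons a c b h q ih =>
      intro hp ha hb'
      rw [SimpleGraph.Walk.cons_isPath_iff] at hp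
      by_cases hc : c ∈ S
      · have hat : a = t := hb a c ha hc h
        exact absurd (hat ▸ exit q hc hb') hp.2
      · obtain ⟨w⟩ := ih hp.1 hc hb'
        exact ⟨SimpleGraph.Walk.cons ((hadj _ _).2 h) w⟩
  classical
  constructor
  · rw [SimpleGraph.connected_iff]
    refine ⟨fun a b => ?_, ⟨⟨t, ht⟩⟩⟩
    obtain ⟨p⟩ := htree.isConnected.preconnected a.1 b.1
    obtain ⟨w⟩ := transfer (p.toPath : SimpleGraph.Path G a.1 b.1).1
      (p.toPath).2 a.2 b.2
    exact ⟨w.copy (Subtype.ext rfl) (Subtype.ext rfl)⟩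
  · intro v c hc
    have hinj : Function.Injective (fun a : ↥(Sᶜ) => a.1) := Subtype.val_injective
    have := (SimpleGraph.Walk.map_isCycle_iff_of_injective
      (p := c) (f := ⟨fun a => a.1, fun {a b} h => (hadj a b).1 h⟩) hinj).2 hc
    exact htree.IsAcyclic _ this

section core
variable {Q : Type*} [PartialOrder Q] [Fintype Q]

/-- Everything strictly below an element of `Ici x` and outside `Ici x` is below `t`. -/
lemma down_to_t {x t : Q} (hcov : ∀ z w : Q, x ≤ z → w ⋖ z → w = t ∨ x ≤ w) :
    ∀ z : Q, x ≤ z → ∀ d : Q, ¬ x ≤ d → d < z → d ≤ t := by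
  intro z
  apply WellFoundedLT.induction z
  intro z ih hz d hd hdz
  obtain ⟨w, hdw, hwz⟩ := hdz.exists_le_covby
  rcases hcov z w hz hwz with rfl | hw
  · exact hdw
  · rcases eq_or_lt_of_le hdw with rfl | hdw'
    · exact absurd hw hd
    · exact ih w hwz.lt hw d hd hdw'

/-- From a configuration, produce the conclusion. -/
lemma core (k : ℕ) (htree : (hasse Q).IsTree)
    (hgraded : ∀ C : Set Q, IsMaxChain (· ≤ ·) C → C.ncard = k)
    (hcfg : ConfigUp Q) : Concl Q k := by
  classical
  obtain ⟨x, t, t', htx, htt', ht'x, hchain, hcov⟩ := hcfg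
  obtain ⟨v, hxv, hvub⟩ : ∃ v, x ≤ v ∧ ∀ z, x ≤ z → z ≤ v := by
    obtain ⟨v, hv, hmax⟩ := ((Set.toFinite (Set.Ici x)).toFinset).exists_maximal
      ⟨x, by simp [Set.Finite.mem_toFinset]⟩
    rw [Set.Finite.mem_toFinset] at hv
    refine ⟨v, hv, fun z hz => ?_⟩
    rcases eq_or_ne z v with rfl | hne
    · exact le_refl z
    · rcases hchain hz hv hne with h | h
      · exact h
      · exact absurd (lt_of_le_of_ne h hne.symm)
          (fun hlt => hlt.not_ge (hmax (y := z) ((Set.Finite.mem_toFinset _).2 hz) hlt.le))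
  have htI : t ∉ Set.Ici x := fun h => htx.lt.not_ge h
  have ht'I : t' ∉ Set.Ici x := by
    intro h
    rcases eq_or_lt_of_le h with rfl | hlt
    · exact ht'x rfl
    · exact htt'.2 htx.lt hlt
  have hup : ∀ {z y : Q}, x ≤ z → z < y → x ≤ y := fun hz hzy => hz.trans hzy.le
  have hvmax : ∀ z, v ≤ z → z = v := fun z hz => le_antisymm (hvub z (hxv.trans hz)) hz
  have covv : ∃ w₀, (hasse Q).neighborSet v = {w₀} := by
    by_cases hxv' : x = v
    · refine ⟨t, ?_⟩
      ext w
      simp only [SimpleGraph.mem_neighborSet, Set.mem_singleton_iff]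
      constructor
      · rintro (h | h)
        · exact absurd (hvmax w h.lt.le) h.lt.ne'
        · rcases hcov v w (le_of_eq hxv') h with rfl | h2
          · rfl
          · exact absurd (hxv' ▸ h.lt : w < x) h2.not_gt
      · rintro rfl
        exact Or.inr (hxv' ▸ htx)
    · have hxvlt : x < v := lt_of_le_of_ne hxv hxv'
      obtain ⟨w₀, hw₀, hw₀max⟩ := ((Set.toFinite {w | x ≤ w ∧ w < v}).toFinset).exists_maximal
        ⟨x, by simp [Set.Finite.mem_toFinset]; exact hxvlt⟩
      rw [Set.Finite.mem_toFinset] at hw₀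
      obtain ⟨hxw₀, hw₀v⟩ := hw₀
      have hw₀cov : w₀ ⋖ v := by
        refine ⟨hw₀v, fun c hc1 hc2 => ?_⟩
        exact hc1.not_ge (hw₀max (y := c) ((Set.Finite.mem_toFinset _).2 ⟨hxw₀.trans hc1.le, hc2⟩) hc1.le)
      refine ⟨w₀, ?_⟩
      ext w
      simp only [SimpleGraph.mem_neighborSet, Set.mem_singleton_iff]
      constructor
      · rintro (h | h)
        · exact absurd (hvmax w h.lt.le) h.lt.ne'
        · rcases hcov v w hxv h with rfl | hw
          · exact absurd hxvlt (h.2 htx.lt)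
          · rcases eq_or_ne w w₀ with rfl | hne
            · rfl
            · rcases hchain (show w ∈ Set.Ici x from hw) (show w₀ ∈ Set.Ici x from hxw₀)
                hne with hle | hle
              · exact absurd hw₀v (h.2 (lt_of_le_of_ne hle hne))
              · exact absurd h.lt (hw₀cov.2 (lt_of_le_of_ne hle hne.symm))
      · rintro rfl
        exact Or.inr hw₀cov
  obtain ⟨w₀, hnbr⟩ := covv
  have hIcc : Set.Ici x = Set.Icc x v := Set.ext fun z => ⟨fun h => ⟨h, hvub z h⟩, fun h => h.1⟩
  have hcard : (Set.Ici x).ncard ≤ k - 1 := by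
    have hch2 : IsChain (· ≤ ·) (insert t (Set.Ici x)) :=
      hchain.insert (fun b hb _ => Or.inl (htx.lt.le.trans hb))
    obtain ⟨C, hC, hsubC⟩ := hch2.exists_maxChain
    have hkC : C.ncard = k := hgraded C hC
    have h1 : (insert t (Set.Ici x)).ncard = (Set.Ici x).ncard + 1 :=
      Set.ncard_insert_of_notMem htI (Set.toFinite _)
    have h2 : (insert t (Set.Ici x)).ncard ≤ C.ncard := Set.ncard_le_ncard hsubC (Set.toFinite _)
    omega
  have covSub : ∀ a b : ↥((Set.Ici x)ᶜ), a ⋖ b ↔ a.1 ⋖ b.1 := by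
    intro a b
    constructor
    · intro h
      refine ⟨Subtype.coe_lt_coe.2 h.lt, fun c hc1 hc2 => ?_⟩
      by_cases hcI : c ∈ Set.Ici x
      · exact b.2 (hup hcI hc2)
      · exact h.2 (show a < ⟨c, hcI⟩ from Subtype.coe_lt_coe.1 hc1)
          (show (⟨c, hcI⟩ : ↥((Set.Ici x)ᶜ)) < b from Subtype.coe_lt_coe.1 hc2)
    · intro h
      exact ⟨Subtype.coe_lt_coe.1 h.lt,
        fun c hc1 hc2 => h.2 (Subtype.coe_lt_coe.2 hc1) (Subtype.coe_lt_coe.2 hc2)⟩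
  have hadj : ∀ a b : ↥((Set.Ici x)ᶜ), (hasse ↥((Set.Ici x)ᶜ)).Adj a b ↔
      (hasse Q).Adj a.1 b.1 := fun a b => or_congr (covSub a b) (covSub b a)
  have hbound : ∀ a c : Q, a ∉ Set.Ici x → c ∈ Set.Ici x → (hasse Q).Adj a c → a = t := by
    intro a c ha hc hadj'
    rcases hadj' with h | h
    · rcases hcov c a hc h with rfl | h2
      · rfl
      · exact absurd h2 ha
    · exact absurd (hup hc h.lt) ha
  refine ⟨v, by rw [hnbr]; exact Set.ncard_singleton w₀, Set.Ici x, hxv,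
    ⟨x, v, hxv, hIcc⟩, hcard, tree_delete htree (Set.Ici x) htI hbound _ hadj, ?_⟩
  intro D hD
  have hDvchain : IsChain (· ≤ ·) (Subtype.val '' D) :=
    IsChain.image_of_map_rel _ _ Subtype.val (fun a b h => h) hD.1
  have hmemI : ∀ {d : Q}, d ∈ Subtype.val '' D → d ∉ Set.Ici x := by
    rintro d ⟨d', _, rfl⟩
    exact d'.2
  have hmax' : IsMaxChain (· ≤ ·) (Subtype.val '' D) := by
    refine ⟨hDvchain, fun E hE hsub => Set.Subset.antisymm hsub fun e he => ?_⟩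
    by_contra hnot
    have hcmp : ∀ d ∈ Subtype.val '' D, d ≤ e ∨ e ≤ d := fun d hd =>
      hE (hsub hd) he (fun h => hnot (h ▸ hd))
    by_cases heI : e ∈ Set.Ici x
    · have hlt : ∀ d ∈ Subtype.val '' D, d ≤ t := by
        intro d hd
        rcases hcmp d hd with h | h
        · rcases eq_or_lt_of_le h with rfl | h'
          · exact absurd heI (hmemI hd)
          · exact down_to_t hcov e heI d (hmemI hd) h'
        · exact absurd (hup heI (lt_of_le_of_ne h (fun hh => hnot (hh ▸ hd)))) (hmemI hd)
      have htD : (⟨t, htI⟩ : ↥((Set.Ici x)ᶜ)) ∈ D := by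
        have hch := hD.1.insert (a := ⟨t, htI⟩)
          (fun b hb _ => Or.inr (hlt b.1 ⟨b, hb, rfl⟩))
        have hmem : (⟨t, htI⟩ : ↥((Set.Ici x)ᶜ)) ∈ insert (⟨t, htI⟩ : ↥((Set.Ici x)ᶜ)) D :=
          Set.mem_insert _ _
        rwa [← hD.2 hch (Set.subset_insert _ _)] at hmem
      have ht'D : (⟨t', ht'I⟩ : ↥((Set.Ici x)ᶜ)) ∈ D := by
        have hch := hD.1.insert (a := ⟨t', ht'I⟩)
          (fun b hb _ => Or.inr (show b.1 ≤ t' from (hlt b.1 ⟨b, hb, rfl⟩).trans htt'.lt.le))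
        have hmem : (⟨t', ht'I⟩ : ↥((Set.Ici x)ᶜ)) ∈ insert (⟨t', ht'I⟩ : ↥((Set.Ici x)ᶜ)) D :=
          Set.mem_insert _ _
        rwa [← hD.2 hch (Set.subset_insert _ _)] at hmem
      exact absurd htt'.lt (not_lt_of_ge (hlt t' ⟨_, ht'D, rfl⟩))
    · have hchainD' : IsChain (· ≤ ·) (insert (⟨e, heI⟩ : ↥((Set.Ici x)ᶜ)) D) :=
        hD.1.insert (fun b hb hne => by
          rcases hcmp b.1 ⟨b, hb, rfl⟩ with h | h
          · exact Or.inr h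
          · exact Or.inl h)
      have := hD.2 hchainD' (Set.subset_insert _ _)
      exact hnot ⟨⟨e, heI⟩, this ▸ Set.mem_insert _ _, rfl⟩
  have := hgraded _ hmax'
  rwa [Set.ncard_image_of_injective D Subtype.val_injective] at this

/-- Descent lemma: walking down a clean pendant chain. -/
lemma descend (hconn : (hasse Q).Connected) (v : Q) :
    ∀ x : Q, x < v → (∀ z, x ≤ z → z ≤ v) → IsChain (· ≤ ·) (Set.Ici x) →
    (∀ z w : Q, x < z → w ⋖ z → x ≤ w) →
    ConfigUp Q ∨ IsChain (· ≤ ·) (Set.univ : Set Q) ∨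
      ∃ x' : Q, (∃ a b : Q, a ≠ b ∧ a ⋖ x' ∧ b ⋖ x') ∧ (∃! c, x' ⋖ c) ∧
        (∀ z, x' ≤ z → z ≤ v) ∧ x' ≤ v := by
  intro x
  apply WellFoundedLT.induction x
  intro x ih hxv hub hchain hcovup
  by_cases h2 : ∃ a b : Q, a ≠ b ∧ a ⋖ x ∧ b ⋖ x
  · right; right
    refine ⟨x, h2, ?_, hub, hxv.le⟩
    obtain ⟨c, hc, hcv⟩ := hxv.exists_covby_le
    refine ⟨c, hc, fun c' hc' => ?_⟩
    rcases eq_or_ne c' c with rfl | hne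
    · rfl
    · rcases hchain (show c' ∈ Set.Ici x from hc'.lt.le) (show c ∈ Set.Ici x from hc.lt.le)
        hne with h | h
      · exact absurd (hc.2 hc'.lt (lt_of_le_of_ne h hne)) not_false
      · exact absurd (hc'.2 hc.lt (lt_of_le_of_ne h hne.symm)) not_false
  · by_cases h1 : ∃ w, w ⋖ x
    · obtain ⟨t, ht⟩ := h1
      have huniq : ∀ w, w ⋖ x → w = t := by
        intro w hw
        by_contra hne
        exact h2 ⟨w, t, hne, hw, ht⟩
      by_cases h3 : ∃ t', t ⋖ t' ∧ t' ≠ x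
      · obtain ⟨t', ht', hne⟩ := h3
        left
        refine ⟨x, t, t', ht, ht', hne, hchain, fun z w hz hw => ?_⟩
        rcases eq_or_lt_of_le hz with rfl | hlt
        · exact Or.inl (huniq w hw)
        · exact Or.inr (hcovup z w hlt hw)
      · push_neg at h3
        have hxup : ∀ z, t < z → x ≤ z := by
          intro z hz
          obtain ⟨c, hc, hcz⟩ := hz.exists_covby_le
          rw [h3 c hc] at hcz
          exact hcz
        refine ih t ht.lt (ht.lt.trans hxv) ?_ ?_ ?_
        · intro z hz
          rcases eq_or_lt_of_le hz with rfl | hlt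
          · exact (ht.lt.trans hxv).le
          · exact hub z (hxup z hlt)
        · intro a ha b hb hne
          rcases eq_or_lt_of_le (ha : t ≤ a) with rfl | ha'
          · exact Or.inl hb
          rcases eq_or_lt_of_le (hb : t ≤ b) with rfl | hb'
          · exact Or.inr ha'.le
          exact hchain (hxup a ha') (hxup b hb') hne
        · intro z w hz hw
          have hxz : x ≤ z := hxup z hz
          rcases eq_or_lt_of_le hxz with rfl | hlt
          · exact (huniq w hw) ▸ le_refl t
          · exact ht.lt.le.trans (hcovup z w hlt hw)
    · right; left
      push_neg at h1
      have hmin : ∀ d, ¬ d < x := fun d hd => by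
        obtain ⟨c, hc, hcx⟩ := hd.exists_le_covby
        exact h1 c hcx
      have hclosed : ∀ a, a ∈ Set.Ici x → ∀ b, (hasse Q).Adj a b → b ∈ Set.Ici x := by
        intro a ha b hadj
        rcases hadj with h | h
        · exact ha.trans h.lt.le
        · rcases eq_or_lt_of_le (ha : x ≤ a) with rfl | hlt
          · exact absurd h.lt (hmin b)
          · exact hcovup a b hlt h
      have huniv : ∀ b : Q, b ∈ Set.Ici x := by
        have haux : ∀ (a b : Q) (_ : (hasse Q).Walk a b), a ∈ Set.Ici x → b ∈ Set.Ici x := by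
          intro a b p
          induction p with
          | nil => exact id
          | cons h q ih => intro ha; exact ih (hclosed _ ha _ h)
        intro b
        obtain ⟨p⟩ := hconn.preconnected x b
        exact haux x b p (le_refl x)
      intro a _ b _ hne
      exact hchain (huniv a) (huniv b) hne

/-- Each maximal leaf yields a config, a chain, or a "bad branch vertex". -/
lemma leaf_descend (hconn : (hasse Q).Connected) (v : Q)
    (hleaf : ((hasse Q).neighborSet v).ncard = 1) (hmax : ∀ z, v ≤ z → z = v) :
    ConfigUp Q ∨ IsChain (· ≤ ·) (Set.univ : Set Q) ∨
      ∃ x' : Q, (∃ a b : Q, a ≠ b ∧ a ⋖ x' ∧ b ⋖ x') ∧ (∃! c, x' ⋖ c) ∧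
        (∀ z, x' ≤ z → z ≤ v) ∧ x' ≤ v := by
  obtain ⟨a, ha⟩ := Set.ncard_eq_one.mp hleaf
  have hav : a ⋖ v := by
    have : a ∈ (hasse Q).neighborSet v := ha ▸ rfl
    rcases this with h | h
    · exact absurd (hmax a h.lt.le) h.lt.ne'
    · exact h
  have huniq : ∀ w, w ⋖ v → w = a := by
    intro w hw
    have : w ∈ (hasse Q).neighborSet v := Or.inr hw
    rwa [ha, Set.mem_singleton_iff] at this
  have hchainv : IsChain (· ≤ ·) (Set.Ici v) := by
    intro p hp q hq hne
    exact absurd ((hmax p hp).trans (hmax q hq).symm) hne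
  by_cases h3 : ∃ t', a ⋖ t' ∧ t' ≠ v
  · obtain ⟨t', ht', hne⟩ := h3
    left
    refine ⟨v, a, t', hav, ht', hne, hchainv, fun z w hz hw => ?_⟩
    rw [hmax z hz] at hw
    exact Or.inl (huniq w hw)
  · push_neg at h3
    have hvup : ∀ z, a < z → v ≤ z := by
      intro z hz
      obtain ⟨c, hc, hcz⟩ := hz.exists_covby_le
      rw [h3 c hc] at hcz
      exact hcz
    refine descend hconn v a hav.lt ?_ ?_ ?_
    · intro z hz
      rcases eq_or_lt_of_le hz with rfl | hlt
      · exact hav.lt.le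
      · exact le_of_eq (hmax z (hvup z hlt))
    · intro p hp q hq hne
      rcases eq_or_lt_of_le (hp : a ≤ p) with rfl | hp'
      · exact Or.inl hq
      rcases eq_or_lt_of_le (hq : a ≤ q) with rfl | hq'
      · exact Or.inr hp'.le
      rw [hmax p (hvup p hp'), hmax q (hvup q hq')] at hne
      exact absurd rfl hne
    · intro z w hz hw
      rw [hmax z (hvup z hz)] at hw
      exact (huniq w hw) ▸ le_refl a

end core

section counting
variable {Q : Type*} [PartialOrder Q] [Fintype Q]

/-- If the Hasse diagram is a tree and the poset is not a chain, a configuration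
exists in `Q` or its dual. -/
lemma config_exists (htree : (hasse Q).IsTree)
    (hnotchain : ¬ IsChain (· ≤ ·) (Set.univ : Set Q)) :
    ConfigUp Q ∨ ConfigUp Qᵒᵈ := by
  classical
  by_contra hcon
  push_neg at hcon
  obtain ⟨hc1, hc2⟩ := hcon
  have hdual : hasse Qᵒᵈ = hasse Q := hasse_flip _ _ (fun _ _ => Iff.rfl)
  have hpair : ∃ a b : Q, a ≠ b := by
    by_contra h
    push_neg at h
    exact hnotchain (fun p _ q _ hne => absurd (h p q) hne)
  obtain ⟨a₀, b₀, hne₀⟩ := hpair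
  have hcard2 : 1 < Fintype.card Q := Fintype.one_lt_card_iff_nontrivial.mpr ⟨⟨a₀, b₀, hne₀⟩⟩
  set G := hasse Q with hG
  have hadjex : ∀ v : Q, ∃ w, G.Adj v w := by
    intro v
    obtain ⟨w, hwv⟩ := Fintype.exists_ne_of_one_lt_card hcard2 v
    obtain ⟨p⟩ := htree.isConnected.preconnected v w
    cases p with
    | nil => exact absurd rfl hwv
    | cons h q => exact ⟨_, h⟩
  have hdegpos : ∀ v : Q, 0 < G.degree v := fun v =>
    (G.degree_pos_iff_exists_adj v).mpr (hadjex v)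
  have hsum : ∑ v, G.degree v = 2 * (Fintype.card Q - 1) := by
    rw [SimpleGraph.sum_degrees_eq_twice_card_edges]
    have := htree.card_edgeFinset
    omega
  set A1 := Finset.univ.filter (fun v : Q => G.degree v = 1) with hA1
  set A3 := Finset.univ.filter (fun v : Q => 3 ≤ G.degree v) with hA3
  have hA1A3 : A3.card + 2 ≤ A1.card := by
    have hpt : ∀ v : Q, 2 + (if 3 ≤ G.degree v then 1 else 0) ≤
        G.degree v + (if G.degree v = 1 then 1 else 0) := by
      intro v
      have := hdegpos v
      split_ifs <;> omega
    have hsum2 := Finset.sum_le_sum (fun v (_ : v ∈ Finset.univ) => hpt v)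
    rw [Finset.sum_add_distrib, Finset.sum_add_distrib, Finset.sum_const,
      Finset.card_univ, smul_eq_mul] at hsum2
    have e3 : ∑ v : Q, (if 3 ≤ G.degree v then 1 else 0) = A3.card := by
      rw [hA3, Finset.card_filter]
    have e1 : ∑ v : Q, (if G.degree v = 1 then 1 else 0) = A1.card := by
      rw [hA1, Finset.card_filter]
    rw [e3, e1, hsum] at hsum2
    omega
  set MaxL := Finset.univ.filter (fun v : Q => G.degree v = 1 ∧ ∀ z, v ≤ z → z = v) with hMaxL
  set MinL := Finset.univ.filter (fun v : Q => G.degree v = 1 ∧ ∀ z, z ≤ v → z = v) with hMinL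
  have hmemnbr : ∀ v w : Q, w ∈ G.neighborFinset v ↔ (v ⋖ w ∨ w ⋖ v) := by
    intro v w
    rw [SimpleGraph.mem_neighborFinset]
    exact Iff.rfl
  have hdegnbr : ∀ v : Q, (G.neighborFinset v).card = G.degree v := fun _ => rfl
  have hsubl : A1 ⊆ MaxL ∪ MinL := by
    intro v hv
    rw [hA1, Finset.mem_filter] at hv
    by_cases hmx : ∀ z, v ≤ z → z = v
    · exact Finset.mem_union_left _
        (by rw [hMaxL, Finset.mem_filter]; exact ⟨Finset.mem_univ v, hv.2, hmx⟩)
    by_cases hmn : ∀ z, z ≤ v → z = v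
    · exact Finset.mem_union_right _
        (by rw [hMinL, Finset.mem_filter]; exact ⟨Finset.mem_univ v, hv.2, hmn⟩)
    exfalso
    push_neg at hmx hmn
    obtain ⟨z1, hz1, hz1'⟩ := hmx
    obtain ⟨z2, hz2, hz2'⟩ := hmn
    obtain ⟨c, hc, _⟩ := (lt_of_le_of_ne hz1 (Ne.symm hz1')).exists_covby_le
    obtain ⟨w, _, hw⟩ := (lt_of_le_of_ne hz2 hz2').exists_le_covby
    have hcw : w ≠ c := fun h => absurd (h ▸ (hw.lt.trans hc.lt)) (lt_irrefl _)
    have h2 : ({w, c} : Finset Q) ⊆ G.neighborFinset v := by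
      intro u hu
      rcases Finset.mem_insert.mp hu with rfl | hu
      · exact (hmemnbr v u).2 (Or.inr hw)
      · rw [Finset.mem_singleton] at hu
        subst hu
        exact (hmemnbr v u).2 (Or.inl hc)
    have hle2 := Finset.card_le_card h2
    rw [Finset.card_insert_of_notMem (by simp [hcw]), Finset.card_singleton, hdegnbr] at hle2
    omega
  have hdisj : Disjoint MaxL MinL := by
    rw [Finset.disjoint_left]
    intro v hv hv'
    rw [hMaxL, Finset.mem_filter] at hv
    rw [hMinL, Finset.mem_filter] at hv'
    obtain ⟨w, hw⟩ := hadjex v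
    rcases hw with h | h
    · exact absurd (hv.2.2 w h.lt.le) h.lt.ne'
    · exact absurd (hv'.2.2 w h.lt.le) h.lt.ne
  set D1 := Finset.univ.filter
    (fun x' : Q => (∃ a b : Q, a ≠ b ∧ a ⋖ x' ∧ b ⋖ x') ∧ (∃! c, x' ⋖ c)) with hD1
  set D2 := Finset.univ.filter
    (fun x' : Q => (∃ a b : Q, a ≠ b ∧ x' ⋖ a ∧ x' ⋖ b) ∧ (∃! c, c ⋖ x')) with hD2
  have hleafcard : ∀ v : Q, G.degree v = 1 → (G.neighborSet v).ncard = 1 := by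
    intro v h
    rw [← SimpleGraph.card_neighborSet_eq_degree] at h
    rw [← h]
    exact Nat.card_eq_fintype_card
  have hinj1 : MaxL.card ≤ D1.card := by
    have hex : ∀ v ∈ MaxL, ∃ x', (∃ a b : Q, a ≠ b ∧ a ⋖ x' ∧ b ⋖ x') ∧ (∃! c, x' ⋖ c) ∧
        (∀ z, x' ≤ z → z ≤ v) ∧ x' ≤ v := by
      intro v hv
      rw [hMaxL, Finset.mem_filter] at hv
      rcases leaf_descend htree.isConnected v (hleafcard v hv.2.1) hv.2.2 with h | h | h
      · exact absurd h hc1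
      · exact absurd h hnotchain
      · exact h
    refine Finset.card_le_card_of_injOn (fun v => if h : ∃ x',
        (∃ a b : Q, a ≠ b ∧ a ⋖ x' ∧ b ⋖ x') ∧ (∃! c, x' ⋖ c) ∧
        (∀ z, x' ≤ z → z ≤ v) ∧ x' ≤ v then h.choose else v) ?_ ?_
    · intro v hv
      have h := hex v hv
      simp only [dif_pos h]
      obtain ⟨h1, h2cov, _, _⟩ := h.choose_spec
      rw [hD1, Finset.mem_coe, Finset.mem_filter]
      exact ⟨Finset.mem_univ _, h1, h2cov⟩
    · intro v1 hv1 v2 hv2 heq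
      have h1 := hex v1 hv1
      have h2 := hex v2 hv2
      simp only [dif_pos h1, dif_pos h2] at heq
      obtain ⟨_, _, hub1, hle1⟩ := h1.choose_spec
      obtain ⟨_, _, hub2, hle2⟩ := h2.choose_spec
      exact le_antisymm (hub2 v1 (heq ▸ hle1)) (hub1 v2 (heq.symm ▸ hle2))
  have hinj2 : MinL.card ≤ D2.card := by
    have hcovflip : ∀ a b : Q, (@CovBy Qᵒᵈ (@Preorder.toLT Qᵒᵈ (@PartialOrder.toPreorder Qᵒᵈ
        (OrderDual.instPartialOrder Q))) a b) ↔ b ⋖ a := fun a b =>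
      @covBy_flip Qᵒᵈ (OrderDual.instPartialOrder Q) (inferInstanceAs (PartialOrder Q))
        (fun _ _ => Iff.rfl) a b
    have hex : ∀ v ∈ MinL, ∃ x' : Q, (∃ a b : Q, a ≠ b ∧ x' ⋖ a ∧ x' ⋖ b) ∧ (∃! c, c ⋖ x') ∧
        (∀ z, z ≤ x' → v ≤ z) ∧ v ≤ x' := by
      intro v hv
      rw [hMinL, Finset.mem_filter] at hv
      have hconn' : (hasse Qᵒᵈ).Connected := by rw [hdual]; exact htree.isConnected
      have hleaf' : ((hasse Qᵒᵈ).neighborSet (OrderDual.toDual v)).ncard = 1 := by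
        rw [hdual]; exact hleafcard v hv.2.1
      have hmax' : ∀ z : Qᵒᵈ, OrderDual.toDual v ≤ z → z = OrderDual.toDual v :=
        fun z hz => hv.2.2 z hz
      rcases leaf_descend hconn' (OrderDual.toDual v) hleaf' hmax' with h | h | h
      · exact absurd h hc2
      · exact absurd ((isChain_flip _ _ (fun _ _ => Iff.rfl) _).mp h) hnotchain
      · obtain ⟨x', ⟨p, q, hpq, hp, hq⟩, ⟨c, hc, hcu⟩, hub, hle⟩ := h
        exact ⟨x', ⟨p, q, hpq, (hcovflip p x').1 hp, (hcovflip q x').1 hq⟩,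
          ⟨c, (hcovflip x' c).1 hc, fun c' hc' => hcu c' ((hcovflip x' c').2 hc')⟩,
          fun z hz => hub z hz, hle⟩
    refine Finset.card_le_card_of_injOn (fun v => if h : ∃ x' : Q,
        (∃ a b : Q, a ≠ b ∧ x' ⋖ a ∧ x' ⋖ b) ∧ (∃! c, c ⋖ x') ∧
        (∀ z, z ≤ x' → v ≤ z) ∧ v ≤ x' then h.choose else v) ?_ ?_
    · intro v hv
      have h := hex v hv
      simp only [dif_pos h]
      obtain ⟨h1, h2cov, _, _⟩ := h.choose_spec
      rw [hD2, Finset.mem_coe, Finset.mem_filter]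
      exact ⟨Finset.mem_univ _, h1, h2cov⟩
    · intro v1 hv1 v2 hv2 heq
      have h1 := hex v1 hv1
      have h2 := hex v2 hv2
      simp only [dif_pos h1, dif_pos h2] at heq
      obtain ⟨_, _, hub1, hle1⟩ := h1.choose_spec
      obtain ⟨_, _, hub2, hle2⟩ := h2.choose_spec
      exact le_antisymm (hub1 v2 (heq.symm ▸ hle2)) (hub2 v1 (heq ▸ hle1))
  have hD12 : Disjoint D1 D2 := by
    rw [Finset.disjoint_left]
    intro x hx hx'
    rw [hD1, Finset.mem_filter] at hx
    rw [hD2, Finset.mem_filter] at hx'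
    obtain ⟨a, b, hab, ha, hb⟩ := hx'.2.1
    obtain ⟨c, hc, hcu⟩ := hx.2.2
    exact hab ((hcu a ha).trans (hcu b hb).symm)
  have hD1A3 : D1 ∪ D2 ⊆ A3 := by
    intro x hx
    rw [Finset.mem_union] at hx
    rw [hA3, Finset.mem_filter]
    refine ⟨Finset.mem_univ _, ?_⟩
    rcases hx with hx | hx
    · rw [hD1, Finset.mem_filter] at hx
      obtain ⟨⟨a, b, hab, ha, hb⟩, c, hc, _⟩ := hx.2
      have hsub : ({a, b, c} : Finset Q) ⊆ G.neighborFinset x := by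
        intro u hu
        simp only [Finset.mem_insert, Finset.mem_singleton] at hu
        rcases hu with rfl | rfl | rfl
        · exact (hmemnbr x u).2 (Or.inr ha)
        · exact (hmemnbr x u).2 (Or.inr hb)
        · exact (hmemnbr x u).2 (Or.inl hc)
      have hcard3 : ({a, b, c} : Finset Q).card = 3 := by
        rw [Finset.card_insert_of_notMem, Finset.card_insert_of_notMem,
          Finset.card_singleton]
        · simp only [Finset.mem_singleton]
          exact fun h => absurd (h ▸ (hb.lt.trans hc.lt)) (lt_irrefl _)
        · simp only [Finset.mem_insert, Finset.mem_singleton]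
          push_neg
          exact ⟨hab, fun h => absurd (h ▸ (ha.lt.trans hc.lt)) (lt_irrefl _)⟩
      have := Finset.card_le_card hsub
      rw [hcard3, hdegnbr] at this
      exact this
    · rw [hD2, Finset.mem_filter] at hx
      obtain ⟨⟨a, b, hab, ha, hb⟩, c, hc, _⟩ := hx.2
      have hsub : ({a, b, c} : Finset Q) ⊆ G.neighborFinset x := by
        intro u hu
        simp only [Finset.mem_insert, Finset.mem_singleton] at hu
        rcases hu with rfl | rfl | rfl
        · exact (hmemnbr x u).2 (Or.inl ha)
        · exact (hmemnbr x u).2 (Or.inl hb)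
        · exact (hmemnbr x u).2 (Or.inr hc)
      have hcard3 : ({a, b, c} : Finset Q).card = 3 := by
        rw [Finset.card_insert_of_notMem, Finset.card_insert_of_notMem,
          Finset.card_singleton]
        · simp only [Finset.mem_singleton]
          exact fun h => absurd (h ▸ (hc.lt.trans hb.lt)) (lt_irrefl _)
        · simp only [Finset.mem_insert, Finset.mem_singleton]
          push_neg
          exact ⟨hab, fun h => absurd (h ▸ (hc.lt.trans ha.lt)) (lt_irrefl _)⟩
      have := Finset.card_le_card hsub
      rw [hcard3, hdegnbr] at this
      exact this
  have h1 : A1.card ≤ MaxL.card + MinL.card :=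
    le_trans (Finset.card_le_card hsubl) (Finset.card_union_le _ _)
  have h2 : D1.card + D2.card = (D1 ∪ D2).card := (Finset.card_union_of_disjoint hD12).symm
  have h3 : (D1 ∪ D2).card ≤ A3.card := Finset.card_le_card hD1A3
  omega

end counting

lemma concl_dual {Q : Type*} [PartialOrder Q] {k : ℕ} (h : Concl Qᵒᵈ k) : Concl Q k := by
  obtain ⟨v, hleaf, I, hvI, ⟨x, y, hxy, hIcc⟩, hcard, htreeI, hgr⟩ := h
  have hdual : hasse Qᵒᵈ = hasse Q := hasse_flip _ _ (fun _ _ => Iff.rfl)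
  refine ⟨v, ?_, I, hvI, ⟨y, x, hxy, ?_⟩, hcard, ?_, ?_⟩
  · rw [← hdual]; exact hleaf
  · rw [hIcc]; exact icc_flip _ _ (fun _ _ => Iff.rfl) x y
  · exact (congrArg SimpleGraph.IsTree (hasse_flip (X := ↥(Iᶜ)) (@Subtype.partialOrder Q _ (· ∈ Iᶜ))
      (@Subtype.partialOrder Qᵒᵈ _ (· ∈ Iᶜ)) (fun _ _ => Iff.rfl))).mpr htreeI
  · intro D hD
    exact hgr D ((isMaxChain_flip (X := ↥(Iᶜ)) (@Subtype.partialOrder Q _ (· ∈ Iᶜ))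
      (@Subtype.partialOrder Qᵒᵈ _ (· ∈ Iᶜ)) (fun _ _ => Iff.rfl) D).mp hD)

/-- Let `P` be a graded tree poset of height `k` (every maximal chain has exactly
`k` elements, the Hasse diagram is a tree) that is not a chain.  Then there is a
leaf `v` of the Hasse diagram and an interval `I ∋ v` with `|I| ≤ k - 1` such
that the Hasse diagram of the induced subposet `P \ I` is a tree and `P \ I` is
graded of height `k`. -/
theorem stmt12 {P : Type*} [PartialOrder P] [Fintype P] (k : ℕ)
    (htree : (hasse P).IsTree)
    (hgraded : ∀ C : Set P, IsMaxChain (· ≤ ·) C → C.ncard = k)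
    (hnotchain : ¬ IsChain (· ≤ ·) (Set.univ : Set P)) :
    ∃ v : P, ((hasse P).neighborSet v).ncard = 1 ∧
      ∃ I : Set P, v ∈ I ∧ (∃ x y : P, x ≤ y ∧ I = Set.Icc x y) ∧
        I.ncard ≤ k - 1 ∧
        (hasse ↥(Iᶜ)).IsTree ∧
        (∀ D : Set (↥(Iᶜ)), IsMaxChain (· ≤ ·) D → D.ncard = k) := by
  have hdual : hasse Pᵒᵈ = hasse P := hasse_flip _ _ (fun _ _ => Iff.rfl)
  rcases config_exists htree hnotchain with hcfg | hcfg
  · exact core k htree hgraded hcfg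
  · refine concl_dual (core k ?_ ?_ hcfg)
    · rw [hdual]; exact htree
    · intro C hC
      exact hgraded C ((isMaxChain_flip _ _ (fun _ _ => Iff.rfl) C).mp hC)
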